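/- Let c ≥ 2 and let g, h : ℝ^d → ℝ^c be functions whose components satisfy 0 ≤ g_i(x) ≤ 1 and 0 ≤ h_i(x) ≤ 1 for all x and i, and assume each h_i is Lipschitz continuous with respect to a fixed norm ‖·‖ on ℝ^d with Lipschitz constant L_i > 0. Fix x ∈ ℝ^d, let y satisfy h_y(x) ≥ h_i(x) for all i, and let α ∈ [1/2, 1]. Define r^α(x) = min_{i≠y} (α·(h_y(x) − h_i(x)) + α − 1)/(α·(L_y + L_i)). Then for every δ ∈ ℝ^d with ‖δ‖ ≤ r^α(x) and every i ∈ {1,…,c}, it holds that (1−α)·g_y(x+δ) + α·h_y(x+δ) ≥ (1−α)·g_i(x+δ) + α·h_i(x+δ); that is, the mixed classifier h^α predicts class y on all such perturbed inputs x+δ. -/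
import Mathlib


/-- **Theorem 3: Lipschitz-based certified radius of the mixed classifier.**
With base probabilities `g, h` in `[0,1]`, each `h_i` Lipschitz with constant `L_i > 0`,
`y = argmax_i h_i(x)` and `α ∈ [1/2, 1]`, the mixed classifier
`h^α_i = log ((1-α) g_i + α h_i)` predicts class `y` on every `x + δ` with
`‖δ‖ ≤ r^α(x) = min_{i ≠ y} (α (h_y(x) - h_i(x)) + α - 1) / (α (L_y + L_i))`. -/
theorem mixed_classifier_lipschitz_certified_radius
    {d c : ℕ} (hc : 2 ≤ c)
    (N : (Fin d → ℝ) → ℝ)                      -- a fixed norm on ℝ^d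
    (g h : (Fin d → ℝ) → Fin c → ℝ)
    (hg : ∀ x i, g x i ∈ Set.Icc (0 : ℝ) 1)
    (hh : ∀ x i, h x i ∈ Set.Icc (0 : ℝ) 1)
    (L : Fin c → ℝ) (hL : ∀ i, 0 < L i)
    (hLip : ∀ i : Fin c, ∀ x x' : Fin d → ℝ, |h x' i - h x i| ≤ L i * N (x' - x))
    (x : Fin d → ℝ) (y : Fin c) (hy : ∀ i, h x i ≤ h x y)
    (α : ℝ) (hα : α ∈ Set.Icc (1 / 2 : ℝ) 1) :
    ∀ δ : Fin d → ℝ,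
      N δ ≤ (Finset.univ.filter (fun i : Fin c => i ≠ y)).inf'
          (by
            obtain ⟨i, hi⟩ := Fintype.exists_ne_of_one_lt_card
              (by simpa using lt_of_lt_of_le one_lt_two hc) y
            exact ⟨i, by simp [hi]⟩)
          (fun i => (α * (h x y - h x i) + α - 1) / (α * (L y + L i))) →
      ∀ i : Fin c,
        (1 - α) * g (x + δ) i + α * h (x + δ) i ≤
          (1 - α) * g (x + δ) y + α * h (x + δ) y := by
  intro δ hδ i
  by_cases hiy : i = y
  · subst hiy; exact le_refl _
  · have hmem : i ∈ Finset.univ.filter (fun j : Fin c => j ≠ y) := by simp [hiy]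
    have hle : N δ ≤ (α * (h x y - h x i) + α - 1) / (α * (L y + L i)) :=
      hδ.trans (Finset.inf'_le _ hmem)
    have hα0 : (0 : ℝ) < α := lt_of_lt_of_le (by norm_num) hα.1
    have hα1 : α ≤ 1 := hα.2
    have hα12 : (1 / 2 : ℝ) ≤ α := hα.1
    have hden : 0 < α * (L y + L i) := by
      have := hL y; have := hL i; positivity
    have hkey : N δ * (α * (L y + L i)) ≤ α * (h x y - h x i) + α - 1 :=
      (le_div_iff₀ hden).mp hle
    have h1 := hLip i x (x + δ)
    have h2 := hLip y x (x + δ)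
    have hxd : (x + δ) - x = δ := by ring
    rw [hxd] at h1 h2
    have hi1 := abs_le.mp h1
    have hy1 := abs_le.mp h2
    have hg1 : g (x + δ) i ≤ 1 := (hg (x + δ) i).2
    have hg0 : 0 ≤ g (x + δ) y := (hg (x + δ) y).1
    nlinarith [mul_nonneg (by linarith : (0:ℝ) ≤ 1 - α) (by linarith : (0:ℝ) ≤ 1 - g (x + δ) i),
      mul_nonneg (by linarith : (0:ℝ) ≤ 1 - α) hg0,
      mul_le_mul_of_nonneg_left hi1.2 hα0.le,
      mul_le_mul_of_nonneg_left hy1.1 hα0.le]
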